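/- Let π_{Y,Θ} and π̃_{Y,Θ} be joint densities with D_H(π_{Y,Θ}, π̃_{Y,Θ}) ≤ ε. Then for any δ > 0, with probability greater than 1 - δ over Y ∼ π_Y, one has D_H(π_{Θ|Y}, π̃_{Θ|Y}) ≤ 2ε/δ. -/

import Mathlib

open MeasureTheory


lemma cs_int {X : Type*} [MeasurableSpace X] {μ : Measure X} {u v : X → ℝ}
    (hu0 : ∀ x, 0 ≤ u x) (hv0 : ∀ x, 0 ≤ v x)
    (hu : Integrable (fun x => u x ^ 2) μ) (hv : Integrable (fun x => v x ^ 2) μ)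
    (hum : AEStronglyMeasurable u μ) (hvm : AEStronglyMeasurable v μ) :
    ∫ x, u x * v x ∂μ ≤ Real.sqrt (∫ x, u x ^ 2 ∂μ) * Real.sqrt (∫ x, v x ^ 2 ∂μ) := by
  have hpq : Real.HolderConjugate 2 2 := Real.HolderConjugate.two_two
  have h2 : (ENNReal.ofReal (2:ℝ)) = 2 := by norm_num [ENNReal.ofReal_ofNat]
  have hu2 : MemLp u (ENNReal.ofReal (2:ℝ)) μ := by
    rw [h2, memLp_two_iff_integrable_sq hum]; exact hu
  have hv2 : MemLp v (ENNReal.ofReal (2:ℝ)) μ := by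
    rw [h2, memLp_two_iff_integrable_sq hvm]; exact hv
  have := integral_mul_le_Lp_mul_Lq_of_nonneg hpq
    (Filter.Eventually.of_forall hu0) (Filter.Eventually.of_forall hv0) hu2 hv2
  calc ∫ x, u x * v x ∂μ ≤ (∫ a, u a ^ (2:ℝ) ∂μ) ^ (1/(2:ℝ)) * (∫ a, v a ^ (2:ℝ) ∂μ) ^ (1/(2:ℝ)) := this
  _ = Real.sqrt (∫ x, u x ^ 2 ∂μ) * Real.sqrt (∫ x, v x ^ 2 ∂μ) := by
      rw [← Real.sqrt_eq_rpow, ← Real.sqrt_eq_rpow]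
      congr 2 <;>
      · refine integral_congr_ae (Filter.Eventually.of_forall fun x => ?_)
        simp only [← Real.rpow_natCast]; norm_num

lemma aux_pt {β : Type*} [MeasurableSpace β] (ν : Measure β) (f f' : β → ℝ)
    (hfpos : ∀ θ, 0 ≤ f θ) (hf'pos : ∀ θ, 0 ≤ f' θ)
    (hf : Integrable f ν) (hf' : Integrable f' ν) :
    (∫ θ, f θ ∂ν) * Real.sqrt ((1/2) * ∫ θ,
        (Real.sqrt (f θ / ∫ t, f t ∂ν) - Real.sqrt (f' θ / ∫ t, f' t ∂ν))^2 ∂ν)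
      ≤ Real.sqrt 2 * Real.sqrt (∫ θ, f θ ∂ν) *
        Real.sqrt (∫ θ, (Real.sqrt (f θ) - Real.sqrt (f' θ))^2 ∂ν) := by
  set m := ∫ θ, f θ ∂ν with hm_def
  set m' := ∫ θ, f' θ ∂ν with hm'_def
  have hm0 : 0 ≤ m := integral_nonneg hfpos
  have hm'0 : 0 ≤ m' := integral_nonneg hf'pos
  set A : β → ℝ := fun θ => Real.sqrt (f θ) with hA_def
  set B : β → ℝ := fun θ => Real.sqrt (f' θ) with hB_def
  have hA2 : ∀ θ, A θ ^ 2 = f θ := fun θ => Real.sq_sqrt (hfpos θ)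
  have hB2 : ∀ θ, B θ ^ 2 = f' θ := fun θ => Real.sq_sqrt (hf'pos θ)
  have hA0 : ∀ θ, 0 ≤ A θ := fun θ => Real.sqrt_nonneg _
  have hB0 : ∀ θ, 0 ≤ B θ := fun θ => Real.sqrt_nonneg _
  have hAm : AEStronglyMeasurable A ν :=
    Real.continuous_sqrt.comp_aestronglyMeasurable hf.1
  have hBm : AEStronglyMeasurable B ν :=
    Real.continuous_sqrt.comp_aestronglyMeasurable hf'.1
  have hJ0 : 0 ≤ ∫ θ, (A θ - B θ)^2 ∂ν := integral_nonneg fun θ => sq_nonneg _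
  rcases eq_or_lt_of_le hm0 with hm | hm
  · rw [← hm]
    simp only [zero_mul]
    exact mul_nonneg (mul_nonneg (Real.sqrt_nonneg _) (Real.sqrt_nonneg _)) (Real.sqrt_nonneg _)
  -- m > 0
  have hAB_int : Integrable (fun θ => A θ * B θ) ν := by
    refine Integrable.mono' (hf.add hf') (hAm.mul hBm)
      (Filter.Eventually.of_forall fun θ => ?_)
    rw [Real.norm_of_nonneg (mul_nonneg (hA0 θ) (hB0 θ))]
    simp only [Pi.add_apply]
    nlinarith [sq_nonneg (A θ - B θ), hA2 θ, hB2 θ, hA0 θ, hB0 θ]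
  set c := ∫ θ, A θ * B θ ∂ν with hc_def
  have hc0 : 0 ≤ c := integral_nonneg fun θ => mul_nonneg (hA0 θ) (hB0 θ)
  have hA2_int : Integrable (fun θ => A θ ^ 2) ν := by
    refine hf.congr (Filter.Eventually.of_forall fun θ => ?_); rw [← hA2 θ]
  have hB2_int : Integrable (fun θ => B θ ^ 2) ν := by
    refine hf'.congr (Filter.Eventually.of_forall fun θ => ?_); rw [← hB2 θ]
  have hintA2 : ∫ θ, A θ ^ 2 ∂ν = m := integral_congr_ae (Filter.Eventually.of_forall hA2)
  have hintB2 : ∫ θ, B θ ^ 2 ∂ν = m' := integral_congr_ae (Filter.Eventually.of_forall hB2)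
  have hcs : c ≤ Real.sqrt m * Real.sqrt m' := by
    have := cs_int hA0 hB0 hA2_int hB2_int hAm hBm
    rwa [hintA2, hintB2] at this
  have hJ : ∫ θ, (A θ - B θ)^2 ∂ν = m + m' - 2*c := by
    have hptw : ∀ θ, (A θ - B θ)^2 = f θ + f' θ - 2*(A θ * B θ) := by
      intro θ; rw [← hA2 θ, ← hB2 θ]; ring
    have isum : Integrable (fun θ => f θ + f' θ) ν := hf.add hf'
    have iAB2 : Integrable (fun θ => 2 * (A θ * B θ)) ν := hAB_int.const_mul 2
    rw [integral_congr_ae (Filter.Eventually.of_forall hptw),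
      integral_sub isum iAB2, integral_add hf hf', integral_const_mul]
  rcases eq_or_lt_of_le hm'0 with hm' | hm'
  · -- m' = 0
    have hf'0 : f' =ᵐ[ν] 0 := (integral_eq_zero_iff_of_nonneg hf'pos hf').1 hm'.symm
    have hI : ∫ θ, (Real.sqrt (f θ / m) - Real.sqrt (f' θ / m'))^2 ∂ν = 1 := by
      have hptw : ∀ θ, (Real.sqrt (f θ / m) - Real.sqrt (f' θ / m'))^2 = f θ / m := by
        intro θ
        rw [← hm', div_zero, Real.sqrt_zero, sub_zero, Real.sq_sqrt (div_nonneg (hfpos θ) hm0)]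
      rw [integral_congr_ae (Filter.Eventually.of_forall hptw), integral_div, div_self hm.ne']
    rw [hI]
    have hJm : ∫ θ, (A θ - B θ)^2 ∂ν = m := by
      have : (fun θ => (A θ - B θ)^2) =ᵐ[ν] f := by
        filter_upwards [hf'0] with θ hθ
        simp only [hB_def, hθ, Pi.zero_apply, Real.sqrt_zero, sub_zero, hA2 θ]
      rw [integral_congr_ae this]
    rw [hJm]
    have e1 : Real.sqrt m * Real.sqrt m = m := Real.mul_self_sqrt hm0
    have e2 : Real.sqrt (1/2 * 1) ≤ 1 := by
      rw [mul_one]; exact Real.sqrt_le_one.2 (by norm_num)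
    have e3 : (1:ℝ) ≤ Real.sqrt 2 := by
      rw [show (1:ℝ) = Real.sqrt 1 from (Real.sqrt_one).symm]
      exact Real.sqrt_le_sqrt (by norm_num)
    calc m * Real.sqrt (1/2 * 1) ≤ m * 1 :=
          mul_le_mul_of_nonneg_left e2 hm0
      _ = 1 * m := by ring
      _ ≤ Real.sqrt 2 * m := mul_le_mul_of_nonneg_right e3 hm0
      _ = Real.sqrt 2 * (Real.sqrt m * Real.sqrt m) := by rw [e1]
      _ = Real.sqrt 2 * Real.sqrt m * Real.sqrt m := by ring
  · -- m' > 0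
    have hMM' : 0 < Real.sqrt m * Real.sqrt m' :=
      mul_pos (Real.sqrt_pos.2 hm) (Real.sqrt_pos.2 hm')
    set r := c / (Real.sqrt m * Real.sqrt m') with hr_def
    have hr0 : 0 ≤ r := div_nonneg hc0 hMM'.le
    have hr1 : r ≤ 1 := (div_le_one hMM').2 hcs
    have hI : ∫ θ, (Real.sqrt (f θ / m) - Real.sqrt (f' θ / m'))^2 ∂ν = 2 - 2*r := by
      have hptw : ∀ θ, (Real.sqrt (f θ / m) - Real.sqrt (f' θ / m'))^2
          = f θ / m - 2*((A θ * B θ) / (Real.sqrt m * Real.sqrt m')) + f' θ / m' := by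
        intro θ
        have e1 : Real.sqrt m ≠ 0 := (Real.sqrt_pos.2 hm).ne'
        have e2 : Real.sqrt m' ≠ 0 := (Real.sqrt_pos.2 hm').ne'
        have e0 : ∀ a b M M' : ℝ, M ≠ 0 → M' ≠ 0 →
            (a/M - b/M')^2 = a^2/M^2 - 2*((a*b)/(M*M')) + b^2/M'^2 := by
          intros a b M M' h1 h2; field_simp; ring
        rw [Real.sqrt_div (hfpos θ), Real.sqrt_div (hf'pos θ), e0 _ _ _ _ e1 e2,
          hA2 θ, hB2 θ, Real.sq_sqrt hm0, Real.sq_sqrt hm'0]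
      have i1 : Integrable (fun θ => f θ / m) ν := hf.div_const m
      have i2 : Integrable (fun θ => 2 * (A θ * B θ / (Real.sqrt m * Real.sqrt m'))) ν :=
        (hAB_int.div_const _).const_mul 2
      have i12 : Integrable
          (fun θ => f θ / m - 2 * (A θ * B θ / (Real.sqrt m * Real.sqrt m'))) ν := i1.sub i2
      have i3 : Integrable (fun θ => f' θ / m') ν := hf'.div_const m'
      rw [integral_congr_ae (Filter.Eventually.of_forall hptw),
        integral_add i12 i3, integral_sub i1 i2, integral_const_mul,
        integral_div, integral_div, integral_div,
        div_self hm.ne', div_self hm'.ne']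
      rw [hr_def]; ring
    rw [hI, hJ]
    have hx0 : (0:ℝ) ≤ 1 - r := by linarith
    have lhs_eq : m * Real.sqrt (1/2 * (2 - 2*r)) = Real.sqrt (m^2 * (1 - r)) := by
      rw [show (1:ℝ)/2 * (2 - 2*r) = 1 - r from by ring,
        Real.sqrt_mul (sq_nonneg m), Real.sqrt_sq hm0]
    rw [lhs_eq]
    have rhs_eq : Real.sqrt (2 * m * (m + m' - 2*c))
        = Real.sqrt 2 * Real.sqrt m * Real.sqrt (m + m' - 2*c) := by
      rw [Real.sqrt_mul (by positivity : (0:ℝ) ≤ 2*m), Real.sqrt_mul (by norm_num : (0:ℝ) ≤ 2)]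
    rw [← rhs_eq]
    apply Real.sqrt_le_sqrt
    have hc_eq : c = r * (Real.sqrt m * Real.sqrt m') := by
      rw [hr_def]; field_simp
    have hs : Real.sqrt m * Real.sqrt m' ≤ (m + m')/2 := by
      nlinarith [sq_nonneg (Real.sqrt m - Real.sqrt m'), Real.sq_sqrt hm0, Real.sq_sqrt hm'0]
    have hcr : c ≤ r * ((m + m')/2) := by
      rw [hc_eq]; exact mul_le_mul_of_nonneg_left hs hr0
    nlinarith [mul_le_mul_of_nonneg_left hcr (by positivity : (0:ℝ) ≤ 4*m),
      mul_nonneg (mul_nonneg hm.le (sub_nonneg.2 hr1)) (by linarith : (0:ℝ) ≤ m + 2*m')]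

/-- If `D_H(π_{Y,Θ}, π̃_{Y,Θ}) ≤ ε`, then for any `δ > 0`, with probability
greater than `1 - δ` over `Y ∼ π_Y`, `D_H(π_{Θ|Y}, π̃_{Θ|Y}) ≤ 2ε/δ`. -/
theorem stmt_3 {dY dΘ : ℕ} (π π' : (Fin dY → ℝ) → (Fin dΘ → ℝ) → ℝ)
    (hπpos : ∀ y θ, 0 ≤ π y θ) (hπ'pos : ∀ y θ, 0 ≤ π' y θ)
    (hπint : ∫ y, ∫ θ, π y θ = 1) (hπ'int : ∫ y, ∫ θ, π' y θ = 1)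
    (hπInt : Integrable (fun p : (Fin dY → ℝ) × (Fin dΘ → ℝ) => π p.1 p.2))
    (hπ'Int : Integrable (fun p : (Fin dY → ℝ) × (Fin dΘ → ℝ) => π' p.1 p.2))
    (ε δ : ℝ) (hδ : 0 < δ)
    (hHell : Real.sqrt ((1/2) * ∫ y, ∫ θ,
        (Real.sqrt (π y θ) - Real.sqrt (π' y θ))^2) ≤ ε) :
    1 - δ < ∫ y in {y | Real.sqrt ((1/2) * ∫ θ,
        (Real.sqrt (π y θ / ∫ θ', π y θ') -
         Real.sqrt (π' y θ / ∫ θ', π' y θ'))^2) ≤ 2 * ε / δ}, (∫ θ', π y θ') := by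
  have hvol : (volume : Measure ((Fin dY → ℝ) × (Fin dΘ → ℝ)))
      = (volume : Measure (Fin dY → ℝ)).prod volume := Measure.volume_eq_prod _ _
  rw [hvol] at hπInt hπ'Int
  set m : (Fin dY → ℝ) → ℝ := fun y => ∫ θ, π y θ with hm_def
  set m' : (Fin dY → ℝ) → ℝ := fun y => ∫ θ, π' y θ with hm'_def
  have hm_int : Integrable m := hπInt.integral_prod_left
  have hm'_int : Integrable m' := hπ'Int.integral_prod_left
  have hm_nonneg : ∀ y, 0 ≤ m y := fun y => integral_nonneg (hπpos y)
  have hε0 : 0 ≤ ε := le_trans (Real.sqrt_nonneg _) hHell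
  -- the squared-sqrt-difference function on the product space
  set q : (Fin dY → ℝ) × (Fin dΘ → ℝ) → ℝ :=
    fun p => (Real.sqrt (π p.1 p.2) - Real.sqrt (π' p.1 p.2))^2 with hq_def
  have hq_nonneg : ∀ p, 0 ≤ q p := fun p => sq_nonneg _
  have hd_aesm : AEStronglyMeasurable
      (fun p : (Fin dY → ℝ) × (Fin dΘ → ℝ) => Real.sqrt (π p.1 p.2) - Real.sqrt (π' p.1 p.2))
      (Measure.prod volume volume) :=
    (Real.continuous_sqrt.comp_aestronglyMeasurable hπInt.1).sub
      (Real.continuous_sqrt.comp_aestronglyMeasurable hπ'Int.1)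
  have hq_aesm : AEStronglyMeasurable q (Measure.prod volume volume) := by
    refine (hd_aesm.mul hd_aesm).congr (Filter.Eventually.of_forall fun p => ?_)
    simp [hq_def, sq]
  have hq_int : Integrable q (Measure.prod volume volume) := by
    refine Integrable.mono' ((hπInt.add hπ'Int).const_mul 2) hq_aesm
      (Filter.Eventually.of_forall fun p => ?_)
    rw [Real.norm_of_nonneg (hq_nonneg p)]
    have h1 := Real.sq_sqrt (hπpos p.1 p.2)
    have h2 := Real.sq_sqrt (hπ'pos p.1 p.2)
    simp only [hq_def, Pi.add_apply]
    nlinarith [Real.sqrt_nonneg (π p.1 p.2), Real.sqrt_nonneg (π' p.1 p.2),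
      sq_nonneg (Real.sqrt (π p.1 p.2) + Real.sqrt (π' p.1 p.2))]
  have hq_y_int : Integrable (fun y => ∫ θ, q (y, θ)) := hq_int.integral_prod_left
  have hqy_nonneg : ∀ y, 0 ≤ ∫ θ, q (y, θ) := fun y => integral_nonneg fun θ => hq_nonneg _
  set g2 : (Fin dY → ℝ) → ℝ := fun y => Real.sqrt (∫ θ, q (y, θ)) with hg2_def
  -- the conditional Hellinger distance
  set H : (Fin dY → ℝ) → ℝ := fun y => Real.sqrt ((1/2) * ∫ θ,
      (Real.sqrt (π y θ / m y) - Real.sqrt (π' y θ / m' y))^2) with hH_def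
  have hH0 : ∀ y, 0 ≤ H y := fun y => Real.sqrt_nonneg _
  -- measurability of H
  have hmm : AEStronglyMeasurable (fun p : (Fin dY → ℝ) × (Fin dΘ → ℝ) => m p.1)
      (Measure.prod volume volume) :=
    hm_int.1.comp_quasiMeasurePreserving Measure.quasiMeasurePreserving_fst
  have hmm' : AEStronglyMeasurable (fun p : (Fin dY → ℝ) × (Fin dΘ → ℝ) => m' p.1)
      (Measure.prod volume volume) :=
    hm'_int.1.comp_quasiMeasurePreserving Measure.quasiMeasurePreserving_fst
  have hΦd : AEStronglyMeasurable
      (fun p : (Fin dY → ℝ) × (Fin dΘ → ℝ) =>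
        Real.sqrt (π p.1 p.2 / m p.1) - Real.sqrt (π' p.1 p.2 / m' p.1))
      (Measure.prod volume volume) :=
    (Real.continuous_sqrt.comp_aestronglyMeasurable
        (hπInt.1.aemeasurable.div hmm.aemeasurable).aestronglyMeasurable).sub
      (Real.continuous_sqrt.comp_aestronglyMeasurable
        (hπ'Int.1.aemeasurable.div hmm'.aemeasurable).aestronglyMeasurable)
  have hΦ : AEStronglyMeasurable
      (fun p : (Fin dY → ℝ) × (Fin dΘ → ℝ) =>
        (Real.sqrt (π p.1 p.2 / m p.1) - Real.sqrt (π' p.1 p.2 / m' p.1))^2)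
      (Measure.prod volume volume) := by
    refine (hΦd.mul hΦd).congr (Filter.Eventually.of_forall fun p => ?_)
    simp [sq]
  have hHaesm : AEStronglyMeasurable H volume := by
    have h1 : AEStronglyMeasurable (fun y => ∫ θ,
        (Real.sqrt (π y θ / m y) - Real.sqrt (π' y θ / m' y))^2) volume :=
      hΦ.integral_prod_right'
    exact Real.continuous_sqrt.comp_aestronglyMeasurable (h1.const_mul (1/2))
  -- pointwise a.e. bound
  have hbd : ∀ᵐ y, m y * H y ≤ Real.sqrt 2 * (Real.sqrt (m y) * g2 y) := by
    filter_upwards [hπInt.prod_right_ae, hπ'Int.prod_right_ae] with y h1 h2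
    have := aux_pt volume (π y) (π' y) (hπpos y) (hπ'pos y) h1 h2
    calc m y * H y ≤ Real.sqrt 2 * Real.sqrt (m y) * g2 y := this
      _ = Real.sqrt 2 * (Real.sqrt (m y) * g2 y) := by ring
  set G : (Fin dY → ℝ) → ℝ := fun y => Real.sqrt 2 * (Real.sqrt (m y) * g2 y) with hG_def
  have hsqm_aesm : AEStronglyMeasurable (fun y => Real.sqrt (m y)) volume :=
    Real.continuous_sqrt.comp_aestronglyMeasurable hm_int.1
  have hg2_aesm : AEStronglyMeasurable g2 volume :=
    Real.continuous_sqrt.comp_aestronglyMeasurable hq_y_int.1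
  have hsqmg2_int : Integrable (fun y => Real.sqrt (m y) * g2 y) := by
    refine Integrable.mono' ((hm_int.add hq_y_int).const_mul (1/2)) (hsqm_aesm.mul hg2_aesm)
      (Filter.Eventually.of_forall fun y => ?_)
    rw [Real.norm_of_nonneg (mul_nonneg (Real.sqrt_nonneg _) (Real.sqrt_nonneg _))]
    have e1 : Real.sqrt (m y) ^ 2 = m y := Real.sq_sqrt (hm_nonneg y)
    have e2 : g2 y ^ 2 = ∫ θ, q (y, θ) := Real.sq_sqrt (hqy_nonneg y)
    simp only [Pi.add_apply]
    nlinarith [sq_nonneg (Real.sqrt (m y) - g2 y)]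
  have hG_int : Integrable G := hsqmg2_int.const_mul _
  have hmH_int : Integrable (fun y => m y * H y) := by
    refine Integrable.mono' hG_int (hm_int.1.mul hHaesm) ?_
    filter_upwards [hbd] with y hy
    rwa [Real.norm_of_nonneg (mul_nonneg (hm_nonneg y) (hH0 y))]
  -- the key integral bound  ∫ m·H ≤ 2ε
  have hkey : ∫ y, m y * H y ≤ 2 * ε := by
    have hsm2_int : Integrable (fun y => Real.sqrt (m y) ^ 2) := by
      refine hm_int.congr (Filter.Eventually.of_forall fun y => ?_)
      exact (Real.sq_sqrt (hm_nonneg y)).symm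
    have hg22_int : Integrable (fun y => g2 y ^ 2) := by
      refine hq_y_int.congr (Filter.Eventually.of_forall fun y => ?_)
      exact (Real.sq_sqrt (hqy_nonneg y)).symm
    have hcs := cs_int (fun y => Real.sqrt_nonneg (m y)) (fun y => Real.sqrt_nonneg _)
      hsm2_int hg22_int hsqm_aesm hg2_aesm
    have e1 : ∫ y, Real.sqrt (m y) ^ 2 = 1 := by
      rw [show (fun y => Real.sqrt (m y) ^ 2) = m from funext fun y => Real.sq_sqrt (hm_nonneg y)]
      exact hπint
    have e2 : ∫ y, g2 y ^ 2 = ∫ y, ∫ θ, q (y, θ) := by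
      congr 1; exact funext fun y => Real.sq_sqrt (hqy_nonneg y)
    have hQ : ∫ y, ∫ θ, q (y, θ) ≤ 2 * ε ^ 2 := by
      have hid : (∫ y, ∫ θ, (Real.sqrt (π y θ) - Real.sqrt (π' y θ))^2)
          = ∫ y, ∫ θ, q (y, θ) := rfl
      have h0 : 0 ≤ (1/2) * ∫ y, ∫ θ, q (y, θ) := by
        have h00 : (0:ℝ) ≤ ∫ y, ∫ θ, q (y, θ) := integral_nonneg hqy_nonneg
        linarith
      have := Real.sq_sqrt h0
      nlinarith [Real.sqrt_nonneg ((1/2) * ∫ y, ∫ θ, (Real.sqrt (π y θ) - Real.sqrt (π' y θ))^2),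
        hHell]
    have e3 : Real.sqrt (∫ y, g2 y ^ 2) ≤ Real.sqrt 2 * ε := by
      rw [e2]
      calc Real.sqrt (∫ y, ∫ θ, q (y, θ)) ≤ Real.sqrt (2 * ε ^ 2) := Real.sqrt_le_sqrt hQ
        _ = Real.sqrt 2 * ε := by
            rw [Real.sqrt_mul (by norm_num : (0:ℝ) ≤ 2), Real.sqrt_sq hε0]
    have e4 : ∫ y, Real.sqrt (m y) * g2 y ≤ Real.sqrt 2 * ε := by
      calc ∫ y, Real.sqrt (m y) * g2 y
          ≤ Real.sqrt (∫ y, Real.sqrt (m y) ^ 2) * Real.sqrt (∫ y, g2 y ^ 2) := hcs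
        _ = Real.sqrt (∫ y, g2 y ^ 2) := by rw [e1, Real.sqrt_one, one_mul]
        _ ≤ Real.sqrt 2 * ε := e3
    calc ∫ y, m y * H y ≤ ∫ y, G y := integral_mono_ae hmH_int hG_int hbd
      _ = Real.sqrt 2 * ∫ y, Real.sqrt (m y) * g2 y := integral_const_mul _ _
      _ ≤ Real.sqrt 2 * (Real.sqrt 2 * ε) :=
          mul_le_mul_of_nonneg_left e4 (Real.sqrt_nonneg 2)
      _ = 2 * ε := by
          rw [← mul_assoc, Real.mul_self_sqrt (by norm_num : (0:ℝ) ≤ 2)]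
  -- the set and the Markov argument
  set S : Set (Fin dY → ℝ) := {y | H y ≤ 2 * ε / δ} with hS_def
  have hS_nm : NullMeasurableSet S volume :=
    nullMeasurableSet_le hHaesm.aemeasurable aemeasurable_const
  have hsplit : (∫ y in S, m y) + (∫ y in Sᶜ, m y) = 1 := by
    rw [integral_add_compl₀ hS_nm hm_int]; exact hπint
  have hI0 : 0 ≤ ∫ y in Sᶜ, m y := integral_nonneg fun y => hm_nonneg y
  have hQ2 : ∫ y, ∫ θ, q (y, θ) ≤ 2 * ε ^ 2 := by
    have h0 : 0 ≤ (1/2) * ∫ y, ∫ θ, q (y, θ) := by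
      have h00 : (0:ℝ) ≤ ∫ y, ∫ θ, q (y, θ) := integral_nonneg hqy_nonneg
      linarith
    have := Real.sq_sqrt h0
    nlinarith [Real.sqrt_nonneg ((1/2) * ∫ y, ∫ θ, (Real.sqrt (π y θ) - Real.sqrt (π' y θ))^2),
      hHell]
  have hlt : (∫ y in Sᶜ, m y) < δ := by
    rcases eq_or_lt_of_le hε0 with hε | hε
    · -- ε = 0 : the two densities agree a.e., so the set S has full measure
      have h00 : (0:ℝ) ≤ ∫ y, ∫ θ, q (y, θ) := integral_nonneg hqy_nonneg
      have hQ0 : ∫ y, ∫ θ, q (y, θ) = 0 := le_antisymm (by nlinarith) h00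
      have hq_eq0 : (fun y => ∫ θ, q (y, θ)) =ᵐ[volume] 0 :=
        (integral_eq_zero_iff_of_nonneg hqy_nonneg hq_y_int).1 hQ0
      have hae : ∀ᵐ y, H y ≤ 2 * ε / δ := by
        filter_upwards [hq_eq0, hπInt.prod_right_ae, hπ'Int.prod_right_ae,
          hq_int.prod_right_ae] with y h0 h1 h2 h3
        have h0' : ∫ θ, q (y, θ) = 0 := h0
        have hq0 : (fun θ => q (y, θ)) =ᵐ[volume] 0 :=
          (integral_eq_zero_iff_of_nonneg (fun θ => hq_nonneg _) h3).1 h0'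
        have hππ' : (fun θ => π y θ) =ᵐ[volume] fun θ => π' y θ := by
          filter_upwards [hq0] with θ hθ
          have hθ' : (Real.sqrt (π y θ) - Real.sqrt (π' y θ))^2 = 0 := hθ
          have hsub : Real.sqrt (π y θ) = Real.sqrt (π' y θ) := by
            have := pow_eq_zero_iff (n := 2) (by norm_num) |>.1 hθ'
            linarith [sub_eq_zero.1 this]
          have e1 := Real.sq_sqrt (hπpos y θ)
          have e2 := Real.sq_sqrt (hπ'pos y θ)
          rw [← e1, ← e2, hsub]
        have hmeq : m y = m' y := integral_congr_ae hππ'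
        have hint0 : ∫ θ, (Real.sqrt (π y θ / m y) - Real.sqrt (π' y θ / m' y))^2 = 0 := by
          have hz : (fun θ => (Real.sqrt (π y θ / m y) - Real.sqrt (π' y θ / m' y))^2)
              =ᵐ[volume] 0 := by
            filter_upwards [hππ'] with θ hθ
            simp only [hθ, hmeq, sub_self, Pi.zero_apply]
            simp
          rw [integral_congr_ae hz]; simp
        show Real.sqrt ((1/2) * ∫ θ,
            (Real.sqrt (π y θ / m y) - Real.sqrt (π' y θ / m' y))^2) ≤ 2 * ε / δ
        rw [hint0]
        simp only [mul_zero, Real.sqrt_zero]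
        positivity
      have hnull : volume Sᶜ = 0 := by
        have h1 : volume {y | ¬ (H y ≤ 2 * ε / δ)} = 0 := ae_iff.1 hae
        have h2 : Sᶜ = {y | ¬ (H y ≤ 2 * ε / δ)} := by
          rw [hS_def]; ext y; simp
        rw [h2]; exact h1
      rw [Measure.restrict_eq_zero.2 hnull, integral_zero_measure]
      exact hδ
    · -- ε > 0 : Markov with strict handling of the equality case
      have ht : 0 < 2 * ε / δ := by positivity
      have hmono : (2 * ε / δ) * ∫ y in Sᶜ, m y ≤ ∫ y in Sᶜ, m y * H y := by
        rw [← integral_const_mul]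
        refine integral_mono_ae (hm_int.restrict.const_mul _) hmH_int.restrict ?_
        filter_upwards [ae_restrict_mem₀ hS_nm.compl] with y hy
        have hyt : 2 * ε / δ < H y := lt_of_not_ge (by simpa [hS_def] using hy)
        nlinarith [hm_nonneg y]
      have hK : ∫ y in Sᶜ, m y * H y ≤ 2 * ε :=
        le_trans (setIntegral_le_integral hmH_int
          (Filter.Eventually.of_forall fun y => mul_nonneg (hm_nonneg y) (hH0 y))) hkey
      have htδ : (2 * ε / δ) * δ = 2 * ε := div_mul_cancel₀ _ hδ.ne'
      have hIle : ∫ y in Sᶜ, m y ≤ δ :=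
        le_of_mul_le_mul_left (by linarith) ht
      by_contra hcon
      have hIeq : ∫ y in Sᶜ, m y = δ := le_antisymm hIle (not_lt.1 hcon)
      have hKeq : ∫ y in Sᶜ, m y * H y = 2 * ε := by
        have h1 := hmono
        rw [hIeq, htδ] at h1
        exact le_antisymm hK h1
      have hdiff0 : ∫ y in Sᶜ, (m y * H y - (2 * ε / δ) * m y) = 0 := by
        rw [integral_sub hmH_int.restrict (hm_int.restrict.const_mul _), hKeq,
          integral_const_mul, hIeq, htδ, sub_self]
      have hzero : (fun y => m y * H y - (2 * ε / δ) * m y) =ᵐ[volume.restrict Sᶜ] 0 := by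
        refine (integral_eq_zero_iff_of_nonneg_ae ?_
          (hmH_int.restrict.sub (hm_int.restrict.const_mul _))).1 hdiff0
        filter_upwards [ae_restrict_mem₀ hS_nm.compl] with y hy
        have hyt : 2 * ε / δ < H y := lt_of_not_ge (by simpa [hS_def] using hy)
        have := hm_nonneg y
        show (0:ℝ) ≤ m y * H y - (2 * ε / δ) * m y
        nlinarith
      have hm0' : m =ᵐ[volume.restrict Sᶜ] 0 := by
        filter_upwards [hzero, ae_restrict_mem₀ hS_nm.compl] with y h0 hy
        have hyt : 2 * ε / δ < H y := lt_of_not_ge (by simpa [hS_def] using hy)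
        have h0' : m y * H y - (2 * ε / δ) * m y = 0 := h0
        have hfac : m y * (H y - 2 * ε / δ) = 0 := by linarith [h0']
        have := mul_eq_zero.1 hfac
        rcases this with h | h
        · exact h
        · exfalso; linarith
      have hI0' : ∫ y in Sᶜ, m y = 0 := by
        rw [integral_congr_ae hm0']; simp
      rw [hIeq] at hI0'; linarith
  linarith
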